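/- Let G be a finite group, let K be a Carter subgroup of G, and let Y be a subgroup of G containing K such that any two Carter subgroups of Y are conjugate in Y. Then Y is self-normalizing in G, i.e. N_G(Y) = Y. -/

import Mathlib

/-- A Carter subgroup of a group `G` is a nilpotent self-normalizing subgroup. -/
def IsCarterSubgroup {G : Type*} [Group G] (K : Subgroup G) : Prop :=
  Group.IsNilpotent K ∧ Subgroup.normalizer (K : Set G) = K

private lemma normalizer_subgroupOf_aux {G : Type*} [Group G] (H Y : Subgroup G) (hHY : H ≤ Y) :
    Subgroup.normalizer ((H.subgroupOf Y : Subgroup ↥Y) : Set ↥Y) = (Subgroup.normalizer (H : Set G)).subgroupOf Y := by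
  ext y
  simp only [Subgroup.mem_normalizer_iff, Subgroup.mem_subgroupOf]
  constructor
  · intro h x
    constructor
    · intro hx
      have hxY : x ∈ Y := hHY hx
      have := (h ⟨x, hxY⟩).mp (by simpa [Subgroup.mem_subgroupOf] using hx)
      simpa [Subgroup.mem_subgroupOf] using this
    · intro hx
      have hxY : x ∈ Y := by
        have h1 : (↑y * x * (↑y)⁻¹ : G) ∈ Y := hHY hx
        have := Y.mul_mem (Y.mul_mem (Y.inv_mem y.2) h1) y.2
        simpa [mul_assoc] using this
      have := (h ⟨x, hxY⟩).mpr (by simpa [Subgroup.mem_subgroupOf] using hx)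
      simpa [Subgroup.mem_subgroupOf] using this
  · intro h x
    constructor
    · intro hx
      simpa [Subgroup.mem_subgroupOf] using (h (x : G)).mp hx
    · intro hx
      exact (h (x : G)).mpr (by simpa [Subgroup.mem_subgroupOf] using hx)

private lemma mem_normalizer_of_map_conj_eq {G : Type*} [Group G] {K : Subgroup G} {a : G}
    (h : K.map (MulAut.conj a).toMonoidHom = K) : a ∈ Subgroup.normalizer (K : Set G) := by
  rw [Subgroup.mem_normalizer_iff'']
  intro x
  constructor
  · intro hx
    have : x ∈ K.map (MulAut.conj a).toMonoidHom := h.symm ▸ hx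
    rcases this with ⟨z, hz, hzx⟩
    have hz2 : z = a⁻¹ * x * a := by
      simp only [MulEquiv.coe_toMonoidHom, MulAut.conj_apply] at hzx
      rw [← hzx]; group
    rwa [← hz2]
  · intro hx
    have : x ∈ K.map (MulAut.conj a).toMonoidHom :=
      ⟨a⁻¹ * x * a, hx, by simp [MulAut.conj_apply, mul_assoc]⟩
    rwa [h] at this

/-- A subgroup containing a Carter subgroup of `G`, whose own Carter subgroups are
conjugate, is self-normalizing in `G`. -/
theorem self_normalizing_of_contains_carter {G : Type*} [Group G] [Finite G]
    (K Y : Subgroup G) (hK : IsCarterSubgroup K) (hKY : K ≤ Y)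
    (hconj : ∀ K₁ K₂ : Subgroup ↥Y, IsCarterSubgroup K₁ → IsCarterSubgroup K₂ →
      ∃ g : ↥Y, K₁.map (MulAut.conj g).toMonoidHom = K₂) :
    Subgroup.normalizer (Y : Set G) = Y := by
  refine le_antisymm ?_ Subgroup.le_normalizer
  intro g hg
  rw [Subgroup.mem_normalizer_iff] at hg
  -- the conjugate of K by g lies in Y
  set Kg : Subgroup G := K.map (MulAut.conj g).toMonoidHom with hKg
  have hKgY : Kg ≤ Y := by
    rintro _ ⟨x, hx, rfl⟩
    exact (hg x).mp (hKY hx)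
  have hKnil : Group.IsNilpotent ↥K := hK.1
  -- K.subgroupOf Y is a Carter subgroup of Y
  have hC1 : IsCarterSubgroup (K.subgroupOf Y) := by
    constructor
    · exact nilpotent_of_mulEquiv (Subgroup.subgroupOfEquivOfLe hKY).symm
    · rw [normalizer_subgroupOf_aux K Y hKY, hK.2]
  -- Kg.subgroupOf Y is a Carter subgroup of Y
  have hKgnorm : Subgroup.normalizer (Kg : Set G) = Kg := by
    rw [hKg, ← Subgroup.map_equiv_normalizer_eq K (MulAut.conj g), hK.2]
  have hC2 : IsCarterSubgroup (Kg.subgroupOf Y) := by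
    constructor
    · have e1 : ↥K ≃* ↥Kg := (MulAut.conj g).subgroupMap K
      exact nilpotent_of_mulEquiv
        ((e1.trans (Subgroup.subgroupOfEquivOfLe hKgY).symm))
    · rw [normalizer_subgroupOf_aux Kg Y hKgY, hKgnorm]
  obtain ⟨y, hy⟩ := hconj (Kg.subgroupOf Y) (K.subgroupOf Y) hC2 hC1
  -- map the equality through Y.subtype
  have hcm : Y.subtype.comp (MulAut.conj y).toMonoidHom
      = ((MulAut.conj (y : G)).toMonoidHom).comp Y.subtype := by
    ext x; simp [MulAut.conj_apply]
  have hmap : ((Kg.subgroupOf Y).map (MulAut.conj y).toMonoidHom).map Y.subtype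
      = ((Kg.subgroupOf Y).map Y.subtype).map (MulAut.conj (y : G)).toMonoidHom := by
    rw [Subgroup.map_map, Subgroup.map_map, hcm]
  have hG : Kg.map (MulAut.conj (y : G)).toMonoidHom = K := by
    have h1 := congrArg (Subgroup.map Y.subtype) hy
    rw [hmap, Subgroup.subgroupOf_map_subtype, Subgroup.subgroupOf_map_subtype,
      inf_eq_left.mpr hKgY, inf_eq_left.mpr hKY] at h1
    exact h1
  have hcomp : K.map (MulAut.conj ((y : G) * g)).toMonoidHom = K := by
    have he : (MulAut.conj ((y : G) * g)).toMonoidHom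
        = ((MulAut.conj (y : G)).toMonoidHom).comp (MulAut.conj g).toMonoidHom := by
      ext x; simp [MulAut.conj_apply, mul_assoc]
    rw [he, ← Subgroup.map_map, ← hKg, hG]
  have hmem : (y : G) * g ∈ K := by
    rw [← hK.2]
    exact mem_normalizer_of_map_conj_eq hcomp
  have : (y : G)⁻¹ * ((y : G) * g) ∈ Y := Y.mul_mem (Y.inv_mem y.2) (hKY hmem)
  simpa [mul_assoc] using this
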